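/- Define φ₀ and φ₁ from partizan games to scoring games by: φ₀(G) = n if G is equivalent to an integer n, else {φ₁(G^L)|φ₁(G^R)}; φ₁(G) = {n-1|n+1} if G is equivalent to an integer n, else {φ₀(G^L)|φ₀(G^R)}. Then for any partizan game G and i ∈ {0,1}, φᵢ(G) is a well-tempered scoring game with π(φᵢ(G)) = i, φᵢ(G) ∈ J, and ψ(φᵢ(G)) = G (equality of partizan game values). -/

import Mathlib

/-- Well-tempered scoring game trees: an integer (final score) or a position
with lists of Left and Right options. -/
inductive WT : Type where
  | int : ℤ → WT
  | node : List WT → List WT → WT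

namespace WT

/-- Left options. -/
def lopts : WT → List WT
  | int _ => []
  | node L _ => L

/-- Right options. -/
def ropts : WT → List WT
  | int _ => []
  | node _ R => R

theorem sizeOf_lt_of_mem_lopts : ∀ {G g : WT}, g ∈ G.lopts → sizeOf g < sizeOf G := by
  intro G g h
  cases G with
  | int n => simp [lopts] at h
  | node L R =>
    simp only [lopts] at h
    have h1 := List.sizeOf_lt_of_mem h
    have h2 : sizeOf (WT.node L R) = 1 + sizeOf L + sizeOf R := by simp
    omega

theorem sizeOf_lt_of_mem_ropts : ∀ {G g : WT}, g ∈ G.ropts → sizeOf g < sizeOf G := by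
  intro G g h
  cases G with
  | int n => simp [ropts] at h
  | node L R =>
    simp only [ropts] at h
    have h1 := List.sizeOf_lt_of_mem h
    have h2 : sizeOf (WT.node L R) = 1 + sizeOf L + sizeOf R := by simp
    omega

/-- Disjunctive sum of two games. -/
def add (G H : WT) : WT :=
  match G, H with
  | int m, int n => int (m + n)
  | G, H =>
    node ((G.lopts.attach.map fun g => add g.1 H) ++ (H.lopts.attach.map fun h => add G h.1))
         ((G.ropts.attach.map fun g => add g.1 H) ++ (H.ropts.attach.map fun h => add G h.1))
termination_by sizeOf G + sizeOf H
decreasing_by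
  all_goals
    first
      | (have := sizeOf_lt_of_mem_lopts g.2; omega)
      | (have := sizeOf_lt_of_mem_lopts h.2; omega)
      | (have := sizeOf_lt_of_mem_ropts g.2; omega)
      | (have := sizeOf_lt_of_mem_ropts h.2; omega)

/-- Negation of a game: swap players and negate scores. -/
def neg : WT → WT
  | int n => int (-n)
  | node L R =>
    node ((WT.node L R).ropts.attach.map fun g => neg g.1)
         ((WT.node L R).lopts.attach.map fun g => neg g.1)
termination_by G => sizeOf G
decreasing_by
  all_goals
    first
      | exact sizeOf_lt_of_mem_lopts g.2
      | exact sizeOf_lt_of_mem_ropts g.2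

def lmax : List ℤ → ℤ
  | [] => 0
  | x :: xs => xs.foldl max x

def lmin : List ℤ → ℤ
  | [] => 0
  | x :: xs => xs.foldl min x

/-- The pair (left outcome, right outcome). -/
def out : WT → ℤ × ℤ
  | int n => (n, n)
  | node L R =>
    (lmax ((WT.node L R).lopts.attach.map fun g => (out g.1).2),
     lmin ((WT.node L R).ropts.attach.map fun g => (out g.1).1))
termination_by G => sizeOf G
decreasing_by
  all_goals
    first
      | exact sizeOf_lt_of_mem_lopts g.2
      | exact sizeOf_lt_of_mem_ropts g.2

/-- Left outcome L(G): optimal score when Left moves first. -/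
def Lout (G : WT) : ℤ := G.out.1

/-- Right outcome R(G): optimal score when Right moves first. -/
def Rout (G : WT) : ℤ := G.out.2

/-- `IsWT G p` : `G` is a well-tempered game of parity `p`
(`false` = even-tempered, `true` = odd-tempered). -/
inductive IsWT : WT → Bool → Prop where
  | int (n : ℤ) : IsWT (WT.int n) false
  | node {L R : List WT} {p : Bool} (hL : L ≠ []) (hR : R ≠ [])
      (hLp : ∀ g ∈ L, IsWT g p) (hRp : ∀ g ∈ R, IsWT g p) :
      IsWT (WT.node L R) (!p)

/-- `G` is a well-tempered game (of some parity). -/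
def Wt (G : WT) : Prop := ∃ p, IsWT G p

/-- Parity, computed structurally (`false` = even-tempered, `true` = odd-tempered;
agrees with `IsWT` on well-tempered games). -/
def par : WT → Bool
  | int _ => false
  | node [] _ => true
  | node (g :: _) _ => !(par g)

/-- Final score under optimal play when Left moves last. -/
def Lf (G : WT) : ℤ := if G.par then G.Lout else G.Rout

/-- Final score under optimal play when Right moves last. -/
def Rf (G : WT) : ℤ := if G.par then G.Rout else G.Lout

/-- `G ≲ H` : for every well-tempered `X`, `L(G+X) ≤ L(H+X)` and `R(G+X) ≤ R(H+X)`. -/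
def Le (G H : WT) : Prop :=
  ∀ X : WT, X.Wt → (G.add X).Lout ≤ (H.add X).Lout ∧ (G.add X).Rout ≤ (H.add X).Rout

/-- `G ≳ H`. -/
def Ge (G H : WT) : Prop := Le H G

/-- `G ≈ H` : equivalence of scoring games. -/
def Equiv (G H : WT) : Prop :=
  ∀ X : WT, X.Wt → (G.add X).Lout = (H.add X).Lout ∧ (G.add X).Rout = (H.add X).Rout

/-- `G` and `H` are well-tempered with the same parity. -/
def SamePar (G H : WT) : Prop := ∃ p, IsWT G p ∧ IsWT H p

/-- `G` takes values in `S`: every integer subgame lies in `S`. -/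
inductive Valued (S : Set ℤ) : WT → Prop where
  | int {n : ℤ} : n ∈ S → Valued S (WT.int n)
  | node {L R : List WT} : (∀ g ∈ L, Valued S g) → (∀ g ∈ R, Valued S g) →
      Valued S (WT.node L R)

/-- `Subgame H G` : `H` is a subgame of `G`. -/
inductive Subgame : WT → WT → Prop where
  | refl (G : WT) : Subgame G G
  | left {H G' : WT} {L R : List WT} : G' ∈ L → Subgame H G' → Subgame H (WT.node L R)
  | right {H G' : WT} {L R : List WT} : G' ∈ R → Subgame H G' → Subgame H (WT.node L R)

/-- `gap G p` : supremum of `R(H) - L(H)` over subgames `H` of `G` of parity `p`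
(as an element of `WithBot ℤ`; the supremum of the empty set is `⊥ = -∞`). -/
noncomputable def gap (G : WT) (p : Bool) : WithBot ℤ :=
  sSup {x : WithBot ℤ | ∃ H : WT, Subgame H G ∧ IsWT H p ∧ x = ((H.Rout - H.Lout : ℤ) : WithBot ℤ)}

/-- Heating by `t`. -/
def heat (t : ℤ) : WT → WT
  | int n => int n
  | node L R =>
    node ((WT.node L R).lopts.attach.map fun g => (WT.int t).add (heat t g.1))
         ((WT.node L R).ropts.attach.map fun g => (WT.int (-t)).add (heat t g.1))
termination_by G => sizeOf G
decreasing_by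
  all_goals
    first
      | exact sizeOf_lt_of_mem_lopts g.2
      | exact sizeOf_lt_of_mem_ropts g.2

end WT

namespace SetTheory

/-- Pre-games (as in the older Mathlib's `SetTheory.PGame`, which is no longer in Mathlib). -/
inductive PGame : Type (u + 1)
  | mk : ∀ α β : Type u, (α → PGame) → (β → PGame) → PGame

namespace PGame

/-- The pair `(x ≤ y, y ≤ x)` for the usual order on pre-games:
`x ≤ y ↔ (∀ i, ¬ y ≤ xᴸᵢ) ∧ (∀ j, ¬ yᴿⱼ ≤ x)`. -/
def leAux : PGame.{u} → PGame.{u} → Prop × Prop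
  | mk xl xr xL xR => leAuxRight xl xr xL xR (fun i => leAux (xL i)) (fun i => leAux (xR i))
where
  /-- `leAuxRight xl xr xL xR fL fR y` is `leAux (mk xl xr xL xR) y`, given `fL i = leAux (xL i)`
  and `fR i = leAux (xR i)`. -/
  leAuxRight (xl xr : Type u) (xL : xl → PGame.{u}) (xR : xr → PGame.{u})
      (fL : xl → PGame.{u} → Prop × Prop) (fR : xr → PGame.{u} → Prop × Prop) :
      PGame.{u} → Prop × Prop
    | mk yl yr yL yR =>
      ((∀ i, ¬ (fL i (mk yl yr yL yR)).2) ∧ (∀ j, ¬ (leAuxRight xl xr xL xR fL fR (yR j)).2),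
       (∀ j, ¬ (leAuxRight xl xr xL xR fL fR (yL j)).1) ∧ (∀ i, ¬ (fR i (mk yl yr yL yR)).1))

instance : LE PGame.{u} := ⟨fun x y => (leAux x y).1⟩

/-- Equivalence of pre-games: `x ≤ y ∧ y ≤ x`. -/
def Equiv (x y : PGame.{u}) : Prop := x ≤ y ∧ y ≤ x

instance : Zero PGame.{u} := ⟨mk PEmpty PEmpty PEmpty.elim PEmpty.elim⟩

instance : One PGame.{u} := ⟨mk PUnit PEmpty (fun _ => 0) PEmpty.elim⟩

/-- Negation of pre-games. -/
def neg : PGame.{u} → PGame.{u}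
  | mk l r L R => mk r l (fun i => neg (R i)) (fun i => neg (L i))

instance : Neg PGame.{u} := ⟨neg⟩

/-- Sum of pre-games (as in the older Mathlib). -/
def add : PGame.{u} → PGame.{u} → PGame.{u}
  | mk xl xr xL xR => addRight xl xr xL xR (fun i => add (xL i)) (fun i => add (xR i))
where
  /-- `addRight xl xr xL xR fL fR y` is `mk xl xr xL xR + y`, given `fL i = xL i + ·`
  and `fR i = xR i + ·`. -/
  addRight (xl xr : Type u) (xL : xl → PGame.{u}) (xR : xr → PGame.{u})
      (fL : xl → PGame.{u} → PGame.{u}) (fR : xr → PGame.{u} → PGame.{u}) :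
      PGame.{u} → PGame.{u}
    | mk yl yr yL yR =>
      mk (xl ⊕ yl) (xr ⊕ yr)
        (Sum.elim (fun i => fL i (mk yl yr yL yR)) (fun j => addRight xl xr xL xR fL fR (yL j)))
        (Sum.elim (fun i => fR i (mk yl yr yL yR)) (fun j => addRight xl xr xL xR fL fR (yR j)))

instance : Add PGame.{u} := ⟨add⟩

end PGame

end SetTheory

open SetTheory

/-- The partizan game equal to the natural number `n` (in canonical integer form). -/
def natPGame : ℕ → PGame
  | 0 => 0
  | n + 1 => natPGame n + 1

/-- The partizan game equal to the integer `n`. -/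
def intPGame (n : ℤ) : PGame :=
  if 0 ≤ n then natPGame n.toNat else -natPGame (-n).toNat

/-- The map ψ from well-tempered scoring games to normal-play partizan games:
ψ(n) = n for integers and ψ({Gᴸ|Gᴿ}) = {ψ(Gᴸ)|ψ(Gᴿ)}. -/
def psi : WT → PGame
  | WT.int n => intPGame n
  | WT.node L R =>
      PGame.mk {g // g ∈ (WT.node L R).lopts} {g // g ∈ (WT.node L R).ropts}
        (fun g => psi g.1) (fun g => psi g.1)
termination_by G => sizeOf G
decreasing_by
  all_goals
    first
      | exact WT.sizeOf_lt_of_mem_lopts g.2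
      | exact WT.sizeOf_lt_of_mem_ropts g.2

/-- Short partizan game trees: finitely many options at each stage. -/
inductive SPG : Type where
  | node : List SPG → List SPG → SPG

namespace SPG

def lopts : SPG → List SPG
  | node L _ => L

def ropts : SPG → List SPG
  | node _ R => R

theorem sizeOf_lt_of_mem_lopts : ∀ {G g : SPG}, g ∈ G.lopts → sizeOf g < sizeOf G := by
  intro G g h
  cases G with
  | node L R =>
    simp only [lopts] at h
    have h1 := List.sizeOf_lt_of_mem h
    have h2 : sizeOf (SPG.node L R) = 1 + sizeOf L + sizeOf R := by simp
    omega

theorem sizeOf_lt_of_mem_ropts : ∀ {G g : SPG}, g ∈ G.ropts → sizeOf g < sizeOf G := by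
  intro G g h
  cases G with
  | node L R =>
    simp only [ropts] at h
    have h1 := List.sizeOf_lt_of_mem h
    have h2 : sizeOf (SPG.node L R) = 1 + sizeOf L + sizeOf R := by simp
    omega

/-- The partizan game (tree) corresponding to a short partizan game tree. -/
def toPGame : SPG → PGame
  | node L R =>
      PGame.mk {g // g ∈ (SPG.node L R).lopts} {g // g ∈ (SPG.node L R).ropts}
        (fun g => toPGame g.1) (fun g => toPGame g.1)
termination_by G => sizeOf G
decreasing_by
  all_goals
    first
      | exact sizeOf_lt_of_mem_lopts g.2
      | exact sizeOf_lt_of_mem_ropts g.2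

end SPG

/- The maps φ₀ (`i = false`) and φ₁ (`i = true`) from partizan games to well-tempered
scoring games: φ₀(G) = n if G is equivalent to an integer n, else {φ₁(Gᴸ)|φ₁(Gᴿ)};
φ₁(G) = {n-1|n+1} if G is equivalent to an integer n, else {φ₀(Gᴸ)|φ₀(Gᴿ)}. -/
open Classical in
noncomputable def phi (i : Bool) (G : SPG) : WT :=
  if h : ∃ n : ℤ, PGame.Equiv G.toPGame (intPGame n) then
    if i then WT.node [WT.int (h.choose - 1)] [WT.int (h.choose + 1)]
    else WT.int h.choose
  else
    WT.node (G.lopts.attach.map fun g => phi (!i) g.1)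
            (G.ropts.attach.map fun g => phi (!i) g.1)
termination_by sizeOf G
decreasing_by
  all_goals
    first
      | exact SPG.sizeOf_lt_of_mem_lopts g.2
      | exact SPG.sizeOf_lt_of_mem_ropts g.2


namespace SetTheory
namespace PGame

def LeftMoves : PGame.{u} → Type u
  | mk l _ _ _ => l

def RightMoves : PGame.{u} → Type u
  | mk _ r _ _ => r

def moveLeft : (g : PGame.{u}) → LeftMoves g → PGame.{u}
  | mk _ _ L _ => L

def moveRight : (g : PGame.{u}) → RightMoves g → PGame.{u}
  | mk _ _ _ R => R

@[simp] theorem moveLeft_mk {xl xr : Type u} {xL : xl → PGame.{u}} {xR : xr → PGame.{u}} :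
    (mk xl xr xL xR).moveLeft = xL := rfl

@[simp] theorem moveRight_mk {xl xr : Type u} {xL : xl → PGame.{u}} {xR : xr → PGame.{u}} :
    (mk xl xr xL xR).moveRight = xR := rfl

instance isEmpty_zero_leftMoves : IsEmpty (LeftMoves (0 : PGame.{u})) := ⟨fun i => PEmpty.elim i⟩

instance isEmpty_zero_rightMoves : IsEmpty (RightMoves (0 : PGame.{u})) := ⟨fun i => PEmpty.elim i⟩

def LF (x y : PGame.{u}) : Prop := ¬ y ≤ x

infixl:50 " ⧏ " => PGame.LF

theorem leAux_mk_mk {xl xr yl yr : Type u} {xL : xl → PGame.{u}} {xR : xr → PGame.{u}}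
    {yL : yl → PGame.{u}} {yR : yr → PGame.{u}} :
    leAux (mk xl xr xL xR) (mk yl yr yL yR) =
      ((∀ i, ¬ (leAux (xL i) (mk yl yr yL yR)).2) ∧ (∀ j, ¬ (leAux (mk xl xr xL xR) (yR j)).2),
       (∀ j, ¬ (leAux (mk xl xr xL xR) (yL j)).1) ∧ (∀ i, ¬ (leAux (xR i) (mk yl yr yL yR)).1)) := by
  rfl

theorem leAux_swap (x : PGame.{u}) : ∀ y : PGame.{u},
    ((leAux x y).2 ↔ (leAux y x).1) ∧ ((leAux y x).2 ↔ (leAux x y).1) := by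
  induction x with
  | mk xl xr xL xR ihL ihR =>
    intro y
    induction y with
    | mk yl yr yL yR jhL jhR =>
      have h1 : ∀ j, (leAux (yL j) (mk xl xr xL xR)).2 ↔ (leAux (mk xl xr xL xR) (yL j)).1 :=
        fun j => (jhL j).2
      have h2 : ∀ i, (leAux (mk yl yr yL yR) (xR i)).2 ↔ (leAux (xR i) (mk yl yr yL yR)).1 :=
        fun i => (ihR i _).2
      have h3 : ∀ i, (leAux (mk yl yr yL yR) (xL i)).1 ↔ (leAux (xL i) (mk yl yr yL yR)).2 :=
        fun i => (ihL i _).1.symm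
      have h4 : ∀ j, (leAux (yR j) (mk xl xr xL xR)).1 ↔ (leAux (mk xl xr xL xR) (yR j)).2 :=
        fun j => (jhR j).1.symm
      rw [leAux_mk_mk, leAux_mk_mk]
      dsimp only
      simp only [h1, h2, h3, h4, iff_self, and_self]

theorem le_iff_forall_lf {x y : PGame.{u}} :
    x ≤ y ↔ (∀ i, x.moveLeft i ⧏ y) ∧ ∀ j, x ⧏ y.moveRight j := by
  obtain ⟨xl, xr, xL, xR⟩ := x
  obtain ⟨yl, yr, yL, yR⟩ := y
  change (leAux (mk xl xr xL xR) (mk yl yr yL yR)).1 ↔ _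
  rw [leAux_mk_mk]
  exact and_congr (forall_congr' fun i => not_congr ((leAux_swap (xL i) _).1))
    (forall_congr' fun j => not_congr ((leAux_swap (mk xl xr xL xR) (yR j)).1))

theorem lf_iff_exists_le {x y : PGame.{u}} :
    x ⧏ y ↔ (∃ i, x ≤ y.moveLeft i) ∨ ∃ j, x.moveRight j ≤ y := by
  change ¬ y ≤ x ↔ _
  rw [le_iff_forall_lf]
  simp only [LF, not_and_or, not_forall, not_not]

theorem le_refl' : ∀ x : PGame.{u}, x ≤ x
  | mk xl xr xL xR => le_iff_forall_lf.2
      ⟨fun i => lf_iff_exists_le.2 (Or.inl ⟨i, le_refl' (xL i)⟩),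
       fun j => lf_iff_exists_le.2 (Or.inr ⟨j, le_refl' (xR j)⟩)⟩

theorem le_trans_aux {x y z : PGame.{u}}
    (h₁ : ∀ {i}, y ≤ z → z ≤ x.moveLeft i → y ≤ x.moveLeft i)
    (h₂ : ∀ {j}, z.moveRight j ≤ x → x ≤ y → z.moveRight j ≤ y) (hxy : x ≤ y) (hyz : y ≤ z) :
    x ≤ z :=
  le_iff_forall_lf.2 ⟨fun i h => (le_iff_forall_lf.1 hxy).1 i (h₁ hyz h),
    fun j h => (le_iff_forall_lf.1 hyz).2 j (h₂ h hxy)⟩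

theorem le_trans_all (x : PGame.{u}) : ∀ y z : PGame.{u},
    (x ≤ y → y ≤ z → x ≤ z) ∧ (y ≤ z → z ≤ x → y ≤ x) ∧ (z ≤ x → x ≤ y → z ≤ y) := by
  induction x with
  | mk xl xr xL xR IHxl IHxr =>
    intro y
    induction y with
    | mk yl yr yL yR IHyl IHyr =>
      intro z
      induction z with
      | mk zl zr zL zR IHzl IHzr =>
        exact ⟨le_trans_aux (fun {i} => (IHxl i _ _).2.1) fun {j} => (IHzr j).2.2,
          le_trans_aux (fun {i} => (IHyl i _).2.2) fun {j} => (IHxr j _ _).1,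
          le_trans_aux (fun {i} => (IHzl i).1) fun {j} => (IHyr j _).2.1⟩

instance : Preorder PGame.{u} where
  le := fun x y => x ≤ y
  le_refl := le_refl'
  le_trans := fun x y z => (le_trans_all x y z).1

instance : HasEquiv PGame.{u} := ⟨Equiv⟩

@[refl] theorem equiv_refl (x : PGame.{u}) : x ≈ x := ⟨le_refl' x, le_refl' x⟩

theorem Equiv.le {x y : PGame.{u}} (h : x ≈ y) : x ≤ y := h.1

theorem Equiv.ge {x y : PGame.{u}} (h : x ≈ y) : y ≤ x := h.2

theorem Equiv.symm {x y : PGame.{u}} (h : x ≈ y) : y ≈ x := ⟨h.2, h.1⟩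

theorem Equiv.trans {x y z : PGame.{u}} (h1 : x ≈ y) (h2 : y ≈ z) : x ≈ z :=
  ⟨le_trans h1.1 h2.1, le_trans h2.2 h1.2⟩

theorem not_le {x y : PGame.{u}} : ¬ x ≤ y ↔ y ⧏ x := Iff.rfl

theorem lf_irrefl (x : PGame.{u}) : ¬ x ⧏ x := fun h => h (le_refl' x)

theorem lf_of_le_of_lf {x y z : PGame.{u}} (h1 : x ≤ y) (h2 : y ⧏ z) : x ⧏ z :=
  fun h3 => h2 (le_trans h3 h1)

theorem lf_of_lf_of_le {x y z : PGame.{u}} (h1 : x ⧏ y) (h2 : y ≤ z) : x ⧏ z :=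
  fun h3 => h1 (le_trans h2 h3)

theorem lf_congr_left {x₁ x₂ y : PGame.{u}} (hx : x₁ ≈ x₂) : x₁ ⧏ y ↔ x₂ ⧏ y :=
  ⟨fun h => lf_of_le_of_lf hx.2 h, fun h => lf_of_le_of_lf hx.1 h⟩

theorem lf_congr_right {x y₁ y₂ : PGame.{u}} (hy : y₁ ≈ y₂) : x ⧏ y₁ ↔ x ⧏ y₂ :=
  ⟨fun h => lf_of_lf_of_le h hy.1, fun h => lf_of_lf_of_le h hy.2⟩

theorem moveLeft_lf {x : PGame.{u}} (i : x.LeftMoves) : x.moveLeft i ⧏ x :=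
  (le_iff_forall_lf.1 (le_refl' x)).1 i

theorem lf_moveRight {x : PGame.{u}} (j : x.RightMoves) : x ⧏ x.moveRight j :=
  (le_iff_forall_lf.1 (le_refl' x)).2 j

theorem neg_def {xl xr : Type u} {xL : xl → PGame.{u}} {xR : xr → PGame.{u}} :
    -mk xl xr xL xR = mk xr xl (fun j => -xR j) fun i => -xL i := rfl

theorem neg_zero' : -(0 : PGame.{u}) = 0 := by
  show mk _ _ _ _ = mk _ _ _ _
  congr 1 <;> funext i <;> exact i.elim

instance : NegZeroClass PGame.{u} := { zero := 0, neg := neg, neg_zero := neg_zero' }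

theorem neg_le_neg_aux (x : PGame.{u}) : ∀ y : PGame.{u},
    (-y ≤ -x ↔ x ≤ y) ∧ (-x ≤ -y ↔ y ≤ x) := by
  induction x with
  | mk xl xr xL xR ihL ihR =>
    intro y
    induction y with
    | mk yl yr yL yR jhL jhR =>
      have e1 : -mk yl yr yL yR ≤ -mk xl xr xL xR ↔
          (∀ j, -yR j ⧏ -mk xl xr xL xR) ∧ (∀ i, -mk yl yr yL yR ⧏ -xL i) :=
        le_iff_forall_lf (x := mk yr yl (fun j => -yR j) (fun i => -yL i))
          (y := mk xr xl (fun j => -xR j) (fun i => -xL i))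
      have e2 : -mk xl xr xL xR ≤ -mk yl yr yL yR ↔
          (∀ i, -xR i ⧏ -mk yl yr yL yR) ∧ (∀ j, -mk xl xr xL xR ⧏ -yL j) :=
        le_iff_forall_lf (x := mk xr xl (fun j => -xR j) (fun i => -xL i))
          (y := mk yr yl (fun j => -yR j) (fun i => -yL i))
      refine ⟨e1.trans (Iff.trans ?_ le_iff_forall_lf.symm),
        e2.trans (Iff.trans ?_ le_iff_forall_lf.symm)⟩
      · exact ⟨fun ⟨a, b⟩ => ⟨fun i h => b i ((ihL i _).2.2 h), fun j h => a j ((jhR j).2.2 h)⟩,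
          fun ⟨a, b⟩ => ⟨fun j h => b j ((jhR j).2.1 h), fun i h => a i ((ihL i _).2.1 h)⟩⟩
      · exact ⟨fun ⟨a, b⟩ => ⟨fun j h => b j ((jhL j).1.2 h), fun i h => a i ((ihR i _).1.2 h)⟩,
          fun ⟨a, b⟩ => ⟨fun i h => b i ((ihR i _).1.1 h), fun j h => a j ((jhL j).1.1 h)⟩⟩

theorem neg_equiv_neg_iff {x y : PGame.{u}} : -x ≈ -y ↔ x ≈ y :=
  ⟨fun h => ⟨(neg_le_neg_aux x y).1.1 h.2, (neg_le_neg_aux y x).1.1 h.1⟩,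
   fun h => ⟨(neg_le_neg_aux y x).1.2 h.2, (neg_le_neg_aux x y).1.2 h.1⟩⟩

def toLeftMovesAdd : {x y : PGame.{u}} → x.LeftMoves ⊕ y.LeftMoves → (x + y).LeftMoves
  | mk _ _ _ _, mk _ _ _ _, a => a

def toRightMovesAdd : {x y : PGame.{u}} → x.RightMoves ⊕ y.RightMoves → (x + y).RightMoves
  | mk _ _ _ _, mk _ _ _ _, a => a

theorem add_moveLeft_inl {x : PGame.{u}} (y : PGame.{u}) (i : x.LeftMoves) :
    (x + y).moveLeft (toLeftMovesAdd (Sum.inl i)) = x.moveLeft i + y := by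
  cases x; cases y; rfl

theorem add_moveLeft_inr (x : PGame.{u}) {y : PGame.{u}} (i : y.LeftMoves) :
    (x + y).moveLeft (toLeftMovesAdd (Sum.inr i)) = x + y.moveLeft i := by
  cases x; cases y; rfl

theorem add_moveRight_inl {x : PGame.{u}} (y : PGame.{u}) (i : x.RightMoves) :
    (x + y).moveRight (toRightMovesAdd (Sum.inl i)) = x.moveRight i + y := by
  cases x; cases y; rfl

theorem add_moveRight_inr (x : PGame.{u}) {y : PGame.{u}} (i : y.RightMoves) :
    (x + y).moveRight (toRightMovesAdd (Sum.inr i)) = x + y.moveRight i := by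
  cases x; cases y; rfl

theorem leftMoves_add_cases {x y : PGame.{u}} (k : (x + y).LeftMoves)
    {P : (x + y).LeftMoves → Prop}
    (hl : ∀ i, P (toLeftMovesAdd (Sum.inl i))) (hr : ∀ i, P (toLeftMovesAdd (Sum.inr i))) : P k := by
  cases x; cases y
  obtain ⟨k', rfl⟩ : ∃ k', toLeftMovesAdd k' = k := ⟨k, rfl⟩
  rcases k' with a | a
  exacts [hl a, hr a]

theorem rightMoves_add_cases {x y : PGame.{u}} (k : (x + y).RightMoves)
    {P : (x + y).RightMoves → Prop}
    (hl : ∀ i, P (toRightMovesAdd (Sum.inl i))) (hr : ∀ i, P (toRightMovesAdd (Sum.inr i))) : P k := by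
  cases x; cases y
  obtain ⟨k', rfl⟩ : ∃ k', toRightMovesAdd k' = k := ⟨k, rfl⟩
  rcases k' with a | a
  exacts [hl a, hr a]

theorem add_zero_equiv : ∀ x : PGame.{u}, x + 0 ≈ x
  | mk xl xr xL xR => by
    refine ⟨le_iff_forall_lf.2 ⟨?_, fun j => ?_⟩, le_iff_forall_lf.2 ⟨fun i => ?_, ?_⟩⟩
    · rintro (i | i)
      · exact lf_of_le_of_lf (add_zero_equiv (xL i)).1 (moveLeft_lf (x := mk xl xr xL xR) i)
      · exact PEmpty.elim i
    · exact lf_iff_exists_le.2 (Or.inr ⟨Sum.inl j, (add_zero_equiv (xR j)).1⟩)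
    · exact lf_iff_exists_le.2 (Or.inl ⟨Sum.inl i, (add_zero_equiv (xL i)).2⟩)
    · rintro (j | j)
      · exact lf_of_lf_of_le (lf_moveRight (x := mk xl xr xL xR) j) (add_zero_equiv (xR j)).2
      · exact PEmpty.elim j

theorem add_right_aux (x : PGame.{u}) : ∀ y z : PGame.{u},
    (x ≤ y → x + z ≤ y + z) ∧ (x ⧏ y → x + z ⧏ y + z) := by
  induction x with
  | mk xl xr xL xR ihL ihR =>
    intro y
    induction y with
    | mk yl yr yL yR jhL jhR =>
      intro z
      induction z with
      | mk zl zr zL zR khL khR =>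
        refine ⟨fun h => le_iff_forall_lf.2 ⟨?_, ?_⟩, fun h => ?_⟩
        · rintro (i | k)
          · exact (ihL i (mk yl yr yL yR) (mk zl zr zL zR)).2 ((le_iff_forall_lf.1 h).1 i)
          · exact lf_of_le_of_lf ((khL k).1 h)
              (moveLeft_lf (x := mk yl yr yL yR + mk zl zr zL zR) (Sum.inr k))
        · rintro (j | k)
          · exact (jhR j (mk zl zr zL zR)).2 ((le_iff_forall_lf.1 h).2 j)
          · exact lf_of_lf_of_le (lf_moveRight (x := mk xl xr xL xR + mk zl zr zL zR) (Sum.inr k))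
              ((khR k).1 h)
        · rcases lf_iff_exists_le.1 h with ⟨i, hi⟩ | ⟨j, hj⟩
          · exact lf_of_le_of_lf ((jhL i (mk zl zr zL zR)).1 hi)
              (moveLeft_lf (x := mk yl yr yL yR + mk zl zr zL zR) (Sum.inl i))
          · exact lf_of_lf_of_le (lf_moveRight (x := mk xl xr xL xR + mk zl zr zL zR) (Sum.inl j))
              ((ihR j (mk yl yr yL yR) (mk zl zr zL zR)).1 hj)

theorem add_equiv_add_right {x y : PGame.{u}} (z : PGame.{u}) (h : x ≈ y) : x + z ≈ y + z :=
  ⟨(add_right_aux x y z).1 h.1, (add_right_aux y x z).1 h.2⟩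

end PGame
end SetTheory

open SetTheory PGame

/-- canonical integer pgame -/
def cI (n : ℤ) : PGame :=
  if n = 0 then 0
  else if 0 < n then PGame.mk PUnit PEmpty (fun _ => cI (n-1)) PEmpty.elim
  else PGame.mk PEmpty PUnit PEmpty.elim (fun _ => cI (n+1))
termination_by n.natAbs
decreasing_by all_goals omega

theorem cI_zero : cI 0 = 0 := by rw [cI.eq_def]; simp

theorem cI_pos {n : ℤ} (h : 0 < n) :
    cI n = PGame.mk PUnit PEmpty (fun _ => cI (n-1)) PEmpty.elim := by
  rw [cI.eq_def]; simp [h, h.ne']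

theorem cI_neg {n : ℤ} (h : n < 0) :
    cI n = PGame.mk PEmpty PUnit PEmpty.elim (fun _ => cI (n+1)) := by
  rw [cI.eq_def]; simp [h.ne, not_lt.2 h.le]

theorem le_cI {K : PGame} {n : ℤ} (h1 : ∀ i, K.moveLeft i ⧏ cI n)
    (h2 : n < 0 → K ⧏ cI (n+1)) : K ≤ cI n := by
  refine le_iff_forall_lf.2 ⟨h1, ?_⟩
  rcases lt_trichotomy n 0 with h | h | h
  · rw [cI_neg h]; exact fun _ => h2 h
  · subst h; rw [cI_zero]; exact fun j => j.elim
  · rw [cI_pos h]; exact fun j => j.elim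

theorem cI_le {K : PGame} {n : ℤ} (h1 : ∀ j, cI n ⧏ K.moveRight j)
    (h2 : 0 < n → cI (n-1) ⧏ K) : cI n ≤ K := by
  refine le_iff_forall_lf.2 ⟨?_, h1⟩
  rcases lt_trichotomy n 0 with h | h | h
  · rw [cI_neg h]; exact fun i => i.elim
  · subst h; rw [cI_zero]; exact fun i => i.elim
  · rw [cI_pos h]; exact fun _ => h2 h

theorem cI_le_succ (n : ℤ) : cI n ≤ cI (n+1) := by
  rcases lt_trichotomy n 0 with h | h | h
  · refine le_cI (fun i => ?_) (fun h' => ?_)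
    · rw [cI_neg h] at i; exact i.elim
    · refine lf_iff_exists_le.2 (Or.inr ?_)
      rw [cI_neg h]
      exact ⟨PUnit.unit, by simpa using cI_le_succ (n+1)⟩
  · subst h
    refine le_cI (fun i => ?_) (by norm_num)
    rw [cI_zero] at i; exact i.elim
  · rw [cI_pos h]
    refine le_cI (fun i => ?_) (by omega)
    refine lf_iff_exists_le.2 (Or.inl ?_)
    rw [cI_pos (by omega : (0:ℤ) < n + 1)]
    exact ⟨PUnit.unit, by simpa using cI_le_succ (n-1)⟩
termination_by n.natAbs
decreasing_by all_goals omega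

theorem cI_mono {m n : ℤ} (h : m ≤ n) : cI m ≤ cI n := by
  obtain ⟨k, rfl⟩ : ∃ k : ℕ, n = m + k := ⟨(n - m).toNat, by omega⟩
  clear h
  induction k with
  | zero => simp
  | succ k ih =>
    have h2 := cI_le_succ (m + k)
    have e : m + (k + 1 : ℕ) = (m + k) + 1 := by push_cast; ring
    rw [e]
    exact ih.trans h2

theorem cI_lf_succ (n : ℤ) : cI n ⧏ cI (n+1) := by
  rcases lt_or_ge n 0 with h | h
  · refine lf_iff_exists_le.2 (Or.inr ?_)
    rw [cI_neg h]
    exact ⟨PUnit.unit, le_rfl⟩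
  · refine lf_iff_exists_le.2 (Or.inl ?_)
    rw [cI_pos (by omega : (0:ℤ) < n + 1)]
    exact ⟨PUnit.unit, by simp⟩

theorem cI_not_le {m n : ℤ} (h : m < n) : ¬ cI n ≤ cI m := fun hle =>
  lf_irrefl (cI m) (lf_of_lf_of_le (cI_lf_succ m) ((cI_mono (by omega : m + 1 ≤ n)).trans hle))

theorem cI_lf {m n : ℤ} (h : m < n) : cI m ⧏ cI n :=
  PGame.not_le.1 (cI_not_le h)


theorem cI_moveLeft {n : ℤ} : ∀ a : (cI n).LeftMoves, (cI n).moveLeft a = cI (n-1) := by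
  rcases lt_trichotomy n 0 with h | h | h
  · rw [cI_neg h]; exact fun a => a.elim
  · subst h; rw [cI_zero]; exact fun a => a.elim
  · rw [cI_pos h]; exact fun a => rfl

theorem cI_moveRight {n : ℤ} : ∀ a : (cI n).RightMoves, (cI n).moveRight a = cI (n+1) := by
  rcases lt_trichotomy n 0 with h | h | h
  · rw [cI_neg h]; exact fun a => rfl
  · subst h; rw [cI_zero]; exact fun a => a.elim
  · rw [cI_pos h]; exact fun a => a.elim

theorem cI_leftMoves_empty {n : ℤ} (h : n ≤ 0) : IsEmpty (cI n).LeftMoves := by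
  rcases eq_or_lt_of_le h with h' | h'
  · subst h'; rw [cI_zero]; exact ⟨fun a => a.elim⟩
  · rw [cI_neg h']; exact ⟨fun a => a.elim⟩

def cI_rightMove {n : ℤ} (h : n < 0) : (cI n).RightMoves := by
  rw [cI_neg h]; exact PUnit.unit

theorem lf_add_one (x : PGame) : x ⧏ x + 1 :=
  lf_iff_exists_le.2 (Or.inl ⟨toLeftMovesAdd (Sum.inr (show (1 : PGame).LeftMoves from PUnit.unit)), by
    rw [add_moveLeft_inr]; exact PGame.Equiv.le (PGame.Equiv.symm (add_zero_equiv x))⟩)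

theorem mkEquiv {xl xr : Type u} {L1 L2 : xl → PGame} {R1 R2 : xr → PGame}
    (hL : ∀ i, L1 i ≈ L2 i) (hR : ∀ j, R1 j ≈ R2 j) :
    PGame.mk xl xr L1 R1 ≈ PGame.mk xl xr L2 R2 := by
  constructor
  · refine le_iff_forall_lf.2 ⟨fun i => ?_, fun j => ?_⟩
    · exact lf_iff_exists_le.2 (Or.inl ⟨i, PGame.Equiv.le (hL i)⟩)
    · exact lf_iff_exists_le.2 (Or.inr ⟨j, PGame.Equiv.le (hR j)⟩)
  · refine le_iff_forall_lf.2 ⟨fun i => ?_, fun j => ?_⟩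
    · exact lf_iff_exists_le.2 (Or.inl ⟨i, PGame.Equiv.le (PGame.Equiv.symm (hL i))⟩)
    · exact lf_iff_exists_le.2 (Or.inr ⟨j, PGame.Equiv.le (PGame.Equiv.symm (hR j))⟩)

theorem cI_add_one : ∀ n : ℤ, cI n + 1 ≈ cI (n+1) := by
  intro n
  constructor
  · -- cI n + 1 ≤ cI (n+1)
    refine le_cI (fun i => ?_) (fun hneg => ?_)
    · refine leftMoves_add_cases (P := fun i => (cI n + 1).moveLeft i ⧏ cI (n+1)) i (fun a => ?_) (fun a => ?_)
      · -- left move in cI n, so n > 0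
        rcases le_or_gt n 0 with hn | hn
        · exact ((cI_leftMoves_empty hn).false a).elim
        · show (cI n + 1).moveLeft (toLeftMovesAdd (Sum.inl a)) ⧏ cI (n+1)
          rw [add_moveLeft_inl, cI_moveLeft a]
          have hrec := cI_add_one (n-1)
          have e : n - 1 + 1 = n := by ring
          rw [e] at hrec
          exact lf_of_le_of_lf (PGame.Equiv.le hrec) (cI_lf (by omega))
      · rw [add_moveLeft_inr]
        have h0 : (1:PGame).moveLeft a = 0 := rfl
        rw [h0]
        exact lf_of_le_of_lf (PGame.Equiv.le (add_zero_equiv _)) (cI_lf (by omega))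
    · -- n + 1 < 0 : show cI n + 1 ⧏ cI (n+1+1)
      refine lf_iff_exists_le.2 (Or.inr ⟨toRightMovesAdd (Sum.inl (cI_rightMove (by omega : n < 0))), ?_⟩)
      rw [add_moveRight_inl, cI_moveRight]
      have hrec := cI_add_one (n+1)
      exact (PGame.Equiv.le hrec).trans (cI_mono (by omega))
  · -- cI (n+1) ≤ cI n + 1
    refine cI_le (fun j => ?_) (fun hpos => ?_)
    · refine rightMoves_add_cases (P := fun j => cI (n+1) ⧏ (cI n + 1).moveRight j) j (fun a => ?_) (fun a => ?_)
      · rw [add_moveRight_inl, cI_moveRight a]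
        exact lf_add_one _
      · exact a.elim
    · have e : n + 1 - 1 = n := by ring
      rw [e]
      exact lf_add_one _
termination_by n => n.natAbs
decreasing_by all_goals omega

theorem natPGame_cI : ∀ k : ℕ, natPGame k ≈ cI (k:ℤ)
  | 0 => by rw [natPGame, Nat.cast_zero, cI_zero]
  | (k+1) => by
    rw [natPGame]
    have h1 : natPGame k + 1 ≈ cI (k:ℤ) + 1 := add_equiv_add_right 1 (natPGame_cI k)
    have h2 := cI_add_one (k:ℤ)
    have e : ((k+1:ℕ):ℤ) = (k:ℤ) + 1 := by push_cast; ring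
    rw [e]
    exact PGame.Equiv.trans h1 h2

theorem neg_cI : ∀ n : ℤ, 0 ≤ n → -cI n ≈ cI (-n) := by
  intro n h
  rcases eq_or_lt_of_le h with h' | h'
  · rw [← h', cI_zero, neg_zero, neg_zero, cI_zero]
  · rw [cI_pos h', cI_neg (by omega : -n < 0), neg_def]
    refine mkEquiv (fun i => i.elim) (fun j => ?_)
    have hrec := neg_cI (n-1) (by omega)
    have e : -(n-1) = -n+1 := by ring
    rw [e] at hrec
    exact hrec
termination_by n => n.toNat
decreasing_by omega

theorem intPGame_cI (n : ℤ) : PGame.Equiv (intPGame n) (cI n) := by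
  rw [intPGame]
  split_ifs with h
  · have := natPGame_cI n.toNat
    rwa [Int.toNat_of_nonneg h] at this
  · have h1 : natPGame (-n).toNat ≈ cI (-n) := by
      have := natPGame_cI (-n).toNat
      rwa [Int.toNat_of_nonneg (by omega : (0:ℤ) ≤ -n)] at this
    have h2 : -natPGame (-n).toNat ≈ -cI (-n) := neg_equiv_neg_iff.2 h1
    have h3 : -cI (-n) ≈ cI n := by
      have := neg_cI (-n) (by omega)
      rwa [neg_neg] at this
    exact PGame.Equiv.trans h2 h3

namespace WT

/- lmax / lmin facts -/
theorem foldl_max_init_le (l : List ℤ) (a : ℤ) : a ≤ l.foldl max a := by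
  induction l generalizing a with
  | nil => exact le_rfl
  | cons b t ih => exact (le_max_left a b).trans (ih (max a b))

theorem le_foldl_max {l : List ℤ} {x : ℤ} (a : ℤ) (h : x ∈ l) : x ≤ l.foldl max a := by
  induction l generalizing a with
  | nil => simp at h
  | cons b t ih =>
    rcases List.mem_cons.1 h with rfl | h'
    · exact (le_max_right a x).trans (foldl_max_init_le t _)
    · exact ih (max a b) h'

theorem foldl_max_mem (l : List ℤ) (a : ℤ) : l.foldl max a = a ∨ l.foldl max a ∈ l := by
  induction l generalizing a with
  | nil => exact Or.inl rfl
  | cons b t ih =>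
    rcases ih (max a b) with h | h
    · rcases max_choice a b with h' | h'
      · rw [List.foldl_cons, h, h']; exact Or.inl rfl
      · rw [List.foldl_cons, h, h']; exact Or.inr (List.mem_cons_self)
    · exact Or.inr (List.mem_cons_of_mem b h)

theorem le_lmax {l : List ℤ} {x : ℤ} (h : x ∈ l) : x ≤ lmax l := by
  cases l with
  | nil => simp at h
  | cons b t =>
    rcases List.mem_cons.1 h with rfl | h'
    · exact foldl_max_init_le t x
    · exact le_foldl_max b h'

theorem lmax_mem {l : List ℤ} (h : l ≠ []) : lmax l ∈ l := by
  cases l with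
  | nil => exact absurd rfl h
  | cons b t =>
    rcases foldl_max_mem t b with h' | h'
    · rw [lmax, h']; exact List.mem_cons_self
    · exact List.mem_cons_of_mem b h'

theorem foldl_min_init_le (l : List ℤ) (a : ℤ) : l.foldl min a ≤ a := by
  induction l generalizing a with
  | nil => exact le_rfl
  | cons b t ih => exact (ih (min a b)).trans (min_le_left a b)

theorem foldl_min_le {l : List ℤ} {x : ℤ} (a : ℤ) (h : x ∈ l) : l.foldl min a ≤ x := by
  induction l generalizing a with
  | nil => simp at h
  | cons b t ih =>
    rcases List.mem_cons.1 h with rfl | h'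
    · exact (foldl_min_init_le t _).trans (min_le_right a x)
    · exact ih (min a b) h'

theorem foldl_min_mem (l : List ℤ) (a : ℤ) : l.foldl min a = a ∨ l.foldl min a ∈ l := by
  induction l generalizing a with
  | nil => exact Or.inl rfl
  | cons b t ih =>
    rcases ih (min a b) with h | h
    · rcases min_choice a b with h' | h'
      · rw [List.foldl_cons, h, h']; exact Or.inl rfl
      · rw [List.foldl_cons, h, h']; exact Or.inr (List.mem_cons_self)
    · exact Or.inr (List.mem_cons_of_mem b h)

theorem lmin_le {l : List ℤ} {x : ℤ} (h : x ∈ l) : lmin l ≤ x := by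
  cases l with
  | nil => simp at h
  | cons b t =>
    rcases List.mem_cons.1 h with rfl | h'
    · exact foldl_min_init_le t x
    · exact foldl_min_le b h'

theorem lmin_mem {l : List ℤ} (h : l ≠ []) : lmin l ∈ l := by
  cases l with
  | nil => exact absurd rfl h
  | cons b t =>
    rcases foldl_min_mem t b with h' | h'
    · rw [lmin, h']; exact List.mem_cons_self
    · exact List.mem_cons_of_mem b h'

/- out computations -/
theorem out_int (n : ℤ) : (WT.int n).out = (n, n) := by rw [out]

theorem out_node (L R : List WT) :
    (WT.node L R).out = (lmax (L.map fun g => g.out.2), lmin (R.map fun g => g.out.1)) := by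
  rw [out]
  simp only [lopts, ropts]
  rw [List.attach_map_val (l := L) (f := fun g => g.out.2), List.attach_map_val (l := R) (f := fun g => g.out.1)]

theorem Lout_int (n : ℤ) : (WT.int n).Lout = n := by rw [Lout, out_int]
theorem Rout_int (n : ℤ) : (WT.int n).Rout = n := by rw [Rout, out_int]

theorem Lout_node (L R : List WT) :
    (WT.node L R).Lout = lmax (L.map Rout) := by rw [Lout, out_node]; rfl

theorem Rout_node (L R : List WT) :
    (WT.node L R).Rout = lmin (R.map Lout) := by rw [Rout, out_node]; rfl

/- parity uniqueness -/
theorem isWT_unique {G : WT} {p q : Bool} (h1 : IsWT G p) (h2 : IsWT G q) : p = q := by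
  induction h1 generalizing q with
  | int n => cases h2; rfl
  | @node L R p hL hR hLp hRp ihL ihR =>
    cases h2 with
    | @node _ _ q' hL' hR' hLp' hRp' =>
      obtain ⟨g, hg⟩ := List.exists_mem_of_ne_nil L hL
      rw [ihL g hg (hLp' g hg)]

theorem subgame_int {H : WT} {n : ℤ} (h : Subgame H (WT.int n)) : H = WT.int n := by
  cases h; rfl

theorem subgame_trans_mem_left {H g : WT} {L R : List WT} (hg : g ∈ L)
    (h : Subgame H g) : Subgame H (WT.node L R) := Subgame.left hg h

end WT

/-! ### stops and the invariant bundle -/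

noncomputable def LS (G : SPG) : ℤ := (phi false G).Lout
noncomputable def RS (G : SPG) : ℤ := (phi false G).Rout
noncomputable def lsS (G : SPG) : ℤ := (phi true G).Lout
noncomputable def rsS (G : SPG) : ℤ := (phi true G).Rout

theorem toPGame_node (L R : List SPG) :
    (SPG.node L R).toPGame = PGame.mk {g // g ∈ L} {g // g ∈ R}
      (fun g => SPG.toPGame g.1) (fun g => SPG.toPGame g.1) := by
  rw [SPG.toPGame]; rfl

theorem psi_int (n : ℤ) : psi (WT.int n) = intPGame n := by rw [psi]

theorem psi_node (L R : List WT) :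
    psi (WT.node L R) = PGame.mk {g // g ∈ L} {g // g ∈ R}
      (fun g => psi g.1) (fun g => psi g.1) := by
  rw [psi]; rfl

theorem phi_pos {G : SPG} (h : ∃ n : ℤ, PGame.Equiv G.toPGame (intPGame n)) :
    phi false G = WT.int h.choose ∧
    phi true G = WT.node [WT.int (h.choose - 1)] [WT.int (h.choose + 1)] := by
  constructor
  · rw [phi, dif_pos h]; rfl
  · rw [phi, dif_pos h]; rfl

theorem phi_neg {L R : List SPG} (h : ¬∃ n : ℤ, PGame.Equiv (SPG.node L R).toPGame (intPGame n)) (i : Bool) :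
    phi i (SPG.node L R) = WT.node (L.attach.map fun g => phi (!i) g.1)
      (R.attach.map fun g => phi (!i) g.1) := by
  rw [phi, dif_neg h]; rfl

structure GoodS (G : SPG) : Prop where
  wt : ∀ i, WT.IsWT (phi i G) i
  sub : ∀ i H p, WT.Subgame H (phi i G) → WT.IsWT H p → H.Rout ≤ H.Lout + (if p then 2 else 0)
  att : ∀ i, ∃ H, WT.Subgame H (phi i G) ∧ WT.IsWT H false ∧ H.Rout = H.Lout
  ls_le : lsS G ≤ LS G
  ls_ge : LS G - 1 ≤ lsS G
  rs_ge : RS G ≤ rsS G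
  rs_le : rsS G ≤ RS G + 1
  sW : G.toPGame ≤ cI (LS G)
  sX : cI (RS G) ≤ G.toPGame
  sU : ¬ cI (rsS G) ≤ G.toPGame
  sV : ¬ G.toPGame ≤ cI (lsS G)
  psiE : ∀ i, PGame.Equiv (psi (phi i G)) G.toPGame

theorem intPGame_zero : intPGame 0 = (0 : PGame) := by
  rw [intPGame]; simp [natPGame]

theorem lemA {R : List SPG} (hGR : ∀ g ∈ R, GoodS g) :
    ∃ n : ℤ, PGame.Equiv (SPG.node [] R).toPGame (intPGame n) := by
  rcases eq_or_ne R [] with rfl | hR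
  · refine ⟨0, ?_⟩
    rw [intPGame_zero, toPGame_node]
    constructor
    · exact le_iff_forall_lf.2 ⟨fun i => absurd i.2 (List.not_mem_nil),
        fun j => isEmptyElim j⟩
    · exact le_iff_forall_lf.2 ⟨fun i => isEmptyElim i,
        fun j => absurd j.2 (List.not_mem_nil)⟩
  · set d := WT.lmin (R.map lsS) with hd
    set n := min 0 d with hn
    refine ⟨n, PGame.Equiv.trans ?_ (PGame.Equiv.symm (intPGame_cI n))⟩
    rw [toPGame_node]
    constructor
    · refine le_cI (fun i => absurd i.2 (List.not_mem_nil)) (fun hneg => ?_)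
      have hdneg : d < 0 := by omega
      have hnd : n = d := by omega
      have hmem : WT.lmin (R.map lsS) ∈ R.map lsS :=
        WT.lmin_mem (by simpa using hR)
      obtain ⟨g, hg, hgd⟩ := List.mem_map.1 hmem
      refine lf_iff_exists_le.2 (Or.inr ⟨⟨g, hg⟩, ?_⟩)
      have h1 : g.toPGame ≤ cI (LS g) := (hGR g hg).sW
      have h2 : LS g ≤ n + 1 := by
        have := (hGR g hg).ls_ge
        omega
      exact h1.trans (cI_mono h2)
    · refine cI_le (fun j => ?_) (fun hpos => absurd hpos (by omega))
      refine PGame.not_le.1 (fun hle => ?_)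
      have h1 : n ≤ lsS j.1 := by
        have := WT.lmin_le (List.mem_map_of_mem (f := lsS) j.2)
        omega
      exact (hGR j.1 j.2).sV (hle.trans (cI_mono h1))

theorem lemA' {L : List SPG} (hGL : ∀ g ∈ L, GoodS g) :
    ∃ n : ℤ, PGame.Equiv (SPG.node L []).toPGame (intPGame n) := by
  rcases eq_or_ne L [] with rfl | hL
  · refine ⟨0, ?_⟩
    rw [intPGame_zero, toPGame_node]
    constructor
    · exact le_iff_forall_lf.2 ⟨fun i => absurd i.2 (List.not_mem_nil),
        fun j => isEmptyElim j⟩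
    · exact le_iff_forall_lf.2 ⟨fun i => isEmptyElim i,
        fun j => absurd j.2 (List.not_mem_nil)⟩
  · set d := WT.lmax (L.map rsS) with hd
    set n := max 0 d with hn
    refine ⟨n, PGame.Equiv.trans ?_ (PGame.Equiv.symm (intPGame_cI n))⟩
    rw [toPGame_node]
    constructor
    · refine le_cI (fun i => ?_) (fun hneg => absurd hneg (by omega))
      refine PGame.not_le.1 (fun hle => ?_)
      have h1 : rsS i.1 ≤ n := by
        have := WT.le_lmax (List.mem_map_of_mem (f := rsS) i.2)
        omega
      exact (hGL i.1 i.2).sU ((cI_mono h1).trans hle)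
    · refine cI_le (fun j => absurd j.2 (List.not_mem_nil)) (fun hpos => ?_)
      have hdpos : 0 < d := by omega
      have hnd : n = d := by omega
      have hmem : WT.lmax (L.map rsS) ∈ L.map rsS :=
        WT.lmax_mem (by simpa using hL)
      obtain ⟨g, hg, hgd⟩ := List.mem_map.1 hmem
      refine lf_iff_exists_le.2 (Or.inl ⟨⟨g, hg⟩, ?_⟩)
      have h1 : cI (RS g) ≤ g.toPGame := (hGL g hg).sX
      have h2 : n - 1 ≤ RS g := by
        have := (hGL g hg).rs_le
        omega
      exact (cI_mono h2).trans h1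

theorem simp_lemma {L R : List SPG}
    (hGL : ∀ g ∈ L, GoodS g) (hGR : ∀ g ∈ R, GoodS g) (n : ℤ)
    (c1 : ∀ g ∈ L, rsS g ≤ n) (c2 : ∀ g ∈ R, n ≤ lsS g)
    (c3 : n < 0 → ∃ g ∈ R, LS g ≤ n + 1)
    (c4 : 0 < n → ∃ g ∈ L, n - 1 ≤ RS g) :
    PGame.Equiv (SPG.node L R).toPGame (cI n) := by
  rw [toPGame_node]
  constructor
  · refine le_cI (fun i => ?_) (fun hneg => ?_)
    · exact PGame.not_le.1 (fun hle => (hGL i.1 i.2).sU ((cI_mono (c1 i.1 i.2)).trans hle))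
    · obtain ⟨g, hg, hgle⟩ := c3 hneg
      exact lf_iff_exists_le.2 (Or.inr ⟨⟨g, hg⟩, (hGR g hg).sW.trans (cI_mono hgle)⟩)
  · refine cI_le (fun j => ?_) (fun hpos => ?_)
    · exact PGame.not_le.1 (fun hle => (hGR j.1 j.2).sV (hle.trans (cI_mono (c2 j.1 j.2))))
    · obtain ⟨g, hg, hgle⟩ := c4 hpos
      exact lf_iff_exists_le.2 (Or.inl ⟨⟨g, hg⟩, (cI_mono hgle).trans (hGL g hg).sX⟩)

section NonInt

variable {L R : List SPG}

theorem eLS (hInt : ¬∃ n : ℤ, PGame.Equiv (SPG.node L R).toPGame (intPGame n)) :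
    LS (SPG.node L R) = WT.lmax (L.map rsS) := by
  rw [LS, phi_neg hInt false, WT.Lout_node, List.map_map]
  rw [show (WT.Rout ∘ fun (g : {g // g ∈ L}) => phi (!false) g.1) = (fun g => rsS g.1) from rfl]
  rw [List.attach_map_val (l := L) (f := rsS)]

theorem eRS (hInt : ¬∃ n : ℤ, PGame.Equiv (SPG.node L R).toPGame (intPGame n)) :
    RS (SPG.node L R) = WT.lmin (R.map lsS) := by
  rw [RS, phi_neg hInt false, WT.Rout_node, List.map_map]
  rw [show (WT.Lout ∘ fun (g : {g // g ∈ R}) => phi (!false) g.1) = (fun g => lsS g.1) from rfl]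
  rw [List.attach_map_val (l := R) (f := lsS)]

theorem elsS (hInt : ¬∃ n : ℤ, PGame.Equiv (SPG.node L R).toPGame (intPGame n)) :
    lsS (SPG.node L R) = WT.lmax (L.map RS) := by
  rw [lsS, phi_neg hInt true, WT.Lout_node, List.map_map]
  rw [show (WT.Rout ∘ fun (g : {g // g ∈ L}) => phi (!true) g.1) = (fun g => RS g.1) from rfl]
  rw [List.attach_map_val (l := L) (f := RS)]

theorem ersS (hInt : ¬∃ n : ℤ, PGame.Equiv (SPG.node L R).toPGame (intPGame n)) :
    rsS (SPG.node L R) = WT.lmin (R.map LS) := by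
  rw [rsS, phi_neg hInt true, WT.Rout_node, List.map_map]
  rw [show (WT.Lout ∘ fun (g : {g // g ∈ R}) => phi (!true) g.1) = (fun g => LS g.1) from rfl]
  rw [List.attach_map_val (l := R) (f := LS)]

theorem stopE (hInt : ¬∃ n : ℤ, PGame.Equiv (SPG.node L R).toPGame (intPGame n))
    (hL : L ≠ []) (hR : R ≠ [])
    (hGL : ∀ g ∈ L, GoodS g) (hGR : ∀ g ∈ R, GoodS g) :
    RS (SPG.node L R) ≤ LS (SPG.node L R) := by
  by_contra hEC
  push_neg at hEC
  rw [eLS hInt, eRS hInt] at hEC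
  set a := WT.lmax (L.map rsS) with ha
  set b := WT.lmin (R.map lsS) with hb
  apply hInt
  set n := max a (min b 0) with hn
  refine ⟨n, PGame.Equiv.trans (simp_lemma hGL hGR n ?_ ?_ ?_ ?_)
    (PGame.Equiv.symm (intPGame_cI n))⟩
  · intro g hg
    have := WT.le_lmax (List.mem_map_of_mem (f := rsS) hg)
    omega
  · intro g hg
    have := WT.lmin_le (List.mem_map_of_mem (f := lsS) hg)
    omega
  · intro hneg
    have hbn : n = b := by omega
    obtain ⟨g, hg, hgd⟩ := List.mem_map.1 (WT.lmin_mem (l := R.map lsS) (by simpa using hR))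
    refine ⟨g, hg, ?_⟩
    have := (hGR g hg).ls_ge
    omega
  · intro hpos
    have han : n = a := by omega
    obtain ⟨g, hg, hgd⟩ := List.mem_map.1 (WT.lmax_mem (l := L.map rsS) (by simpa using hL))
    refine ⟨g, hg, ?_⟩
    have := (hGL g hg).rs_le
    omega

theorem stopF (hInt : ¬∃ n : ℤ, PGame.Equiv (SPG.node L R).toPGame (intPGame n))
    (hL : L ≠ []) (hR : R ≠ [])
    (hGL : ∀ g ∈ L, GoodS g) (hGR : ∀ g ∈ R, GoodS g) :
    rsS (SPG.node L R) ≤ lsS (SPG.node L R) + 2 := by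
  by_contra hEC
  push_neg at hEC
  rw [elsS hInt, ersS hInt] at hEC
  set a := WT.lmax (L.map RS) with ha
  set b := WT.lmin (R.map LS) with hb
  apply hInt
  set n := max (a+1) (min (b-1) 0) with hn
  refine ⟨n, PGame.Equiv.trans (simp_lemma hGL hGR n ?_ ?_ ?_ ?_)
    (PGame.Equiv.symm (intPGame_cI n))⟩
  · intro g hg
    have h1 := WT.le_lmax (List.mem_map_of_mem (f := RS) hg)
    have h2 := (hGL g hg).rs_le
    omega
  · intro g hg
    have h1 := WT.lmin_le (List.mem_map_of_mem (f := LS) hg)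
    have h2 := (hGR g hg).ls_ge
    omega
  · intro hneg
    obtain ⟨g, hg, hgd⟩ := List.mem_map.1 (WT.lmin_mem (l := R.map LS) (by simpa using hR))
    exact ⟨g, hg, by omega⟩
  · intro hpos
    obtain ⟨g, hg, hgd⟩ := List.mem_map.1 (WT.lmax_mem (l := L.map RS) (by simpa using hL))
    exact ⟨g, hg, by omega⟩

end NonInt

theorem good_all : ∀ G : SPG, GoodS G
  | SPG.node L R => by
    have IHL : ∀ g ∈ L, GoodS g := fun g hg =>
      have hlt : sizeOf g < sizeOf (SPG.node L R) := SPG.sizeOf_lt_of_mem_lopts hg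
      good_all g
    have IHR : ∀ g ∈ R, GoodS g := fun g hg =>
      have hlt : sizeOf g < sizeOf (SPG.node L R) := SPG.sizeOf_lt_of_mem_ropts hg
      good_all g
    by_cases hInt : ∃ n : ℤ, PGame.Equiv (SPG.node L R).toPGame (intPGame n)
    · -- integer-equivalent case
      obtain ⟨hf, ht⟩ := phi_pos hInt
      set n := hInt.choose with hn
      have spec : PGame.Equiv (SPG.node L R).toPGame (intPGame n) := hInt.choose_spec
      have hcn : PGame.Equiv (SPG.node L R).toPGame (cI n) :=
        PGame.Equiv.trans spec (intPGame_cI n)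
      have eL : LS (SPG.node L R) = n := by rw [LS, hf, WT.Lout_int]
      have eR : RS (SPG.node L R) = n := by rw [RS, hf, WT.Rout_int]
      have el : lsS (SPG.node L R) = n - 1 := by
        rw [lsS, ht, WT.Lout_node]; simp [WT.lmax, WT.Rout_int]
      have er : rsS (SPG.node L R) = n + 1 := by
        rw [rsS, ht, WT.Rout_node]; simp [WT.lmin, WT.Lout_int]
      have hwt : ∀ i, WT.IsWT (phi i (SPG.node L R)) i := by
        intro i
        cases i with
        | false => rw [hf]; exact WT.IsWT.int n
        | true =>
          rw [ht]
          have h := WT.IsWT.node (L := [WT.int (n-1)]) (R := [WT.int (n+1)]) (p := false)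
            (by simp) (by simp)
            (fun g hg => by rw [List.mem_singleton.1 hg]; exact WT.IsWT.int _)
            (fun g hg => by rw [List.mem_singleton.1 hg]; exact WT.IsWT.int _)
          simpa using h
      refine ⟨hwt, ?_, ?_, by omega, by omega, by omega, by omega,
        by rw [eL]; exact PGame.Equiv.le hcn, by rw [eR]; exact PGame.Equiv.ge hcn, ?_, ?_, ?_⟩
      · -- sub
        intro i H p hsub hwtp
        cases i with
        | false =>
          rw [hf] at hsub
          have hH := WT.subgame_int hsub
          subst hH
          cases hwtp
          simp [WT.Rout_int, WT.Lout_int]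
        | true =>
          rw [ht] at hsub
          cases hsub with
          | refl =>
            have hp : p = true := WT.isWT_unique hwtp (by rw [← ht]; exact hwt true)
            subst hp
            have e1 : (WT.node [WT.int (n-1)] [WT.int (n+1)]).Rout = n + 1 := by
              rw [WT.Rout_node]; simp [WT.lmin, WT.Lout_int]
            have e2 : (WT.node [WT.int (n-1)] [WT.int (n+1)]).Lout = n - 1 := by
              rw [WT.Lout_node]; simp [WT.lmax, WT.Rout_int]
            rw [e1, e2, if_pos rfl]; omega
          | left hmem hsub' =>
            rw [List.mem_singleton.1 hmem] at hsub'
            have hH := WT.subgame_int hsub'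
            subst hH
            cases hwtp
            simp [WT.Rout_int, WT.Lout_int]
          | right hmem hsub' =>
            rw [List.mem_singleton.1 hmem] at hsub'
            have hH := WT.subgame_int hsub'
            subst hH
            cases hwtp
            simp [WT.Rout_int, WT.Lout_int]
      · -- att
        intro i
        cases i with
        | false =>
          exact ⟨WT.int n, by rw [hf]; exact WT.Subgame.refl _, WT.IsWT.int n,
            by rw [WT.Rout_int, WT.Lout_int]⟩
        | true =>
          refine ⟨WT.int (n-1), ?_, WT.IsWT.int _, by rw [WT.Rout_int, WT.Lout_int]⟩
          rw [ht]
          exact WT.Subgame.left (List.mem_singleton_self _) (WT.Subgame.refl _)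
      · -- sU
        rw [er]
        exact fun h => cI_not_le (by omega : n < n + 1) (h.trans (PGame.Equiv.le hcn))
      · -- sV
        rw [el]
        exact fun h => cI_not_le (by omega : n - 1 < n) ((PGame.Equiv.ge hcn).trans h)
      · -- psiE
        intro i
        cases i with
        | false => rw [hf, psi_int]; exact PGame.Equiv.symm spec
        | true =>
          rw [ht, psi_node]
          refine PGame.Equiv.trans ?_ (PGame.Equiv.symm hcn)
          constructor
          · refine le_cI (fun a => ?_) (fun hneg => ?_)
            · have hi : a.1 = WT.int (n-1) := List.mem_singleton.1 a.2
              show psi a.1 ⧏ cI n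
              rw [hi, psi_int]
              exact PGame.not_le.1 (fun h => cI_not_le (by omega : n - 1 < n)
                (h.trans (PGame.Equiv.le (intPGame_cI (n-1)))))
            · refine lf_iff_exists_le.2 (Or.inr ⟨⟨WT.int (n+1), List.mem_singleton_self _⟩, ?_⟩)
              show psi (WT.int (n+1)) ≤ cI (n+1)
              rw [psi_int]
              exact PGame.Equiv.le (intPGame_cI (n+1))
          · refine cI_le (fun j => ?_) (fun hpos => ?_)
            · have hj : j.1 = WT.int (n+1) := List.mem_singleton.1 j.2
              show cI n ⧏ psi j.1
              rw [hj, psi_int]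
              exact PGame.not_le.1 (fun h => cI_not_le (by omega : n < n + 1)
                ((PGame.Equiv.ge (intPGame_cI (n+1))).trans h))
            · refine lf_iff_exists_le.2 (Or.inl ⟨⟨WT.int (n-1), List.mem_singleton_self _⟩, ?_⟩)
              show cI (n-1) ≤ psi (WT.int (n-1))
              rw [psi_int]
              exact PGame.Equiv.ge (intPGame_cI (n-1))
    · -- non-integer case
      have hL : L ≠ [] := by rintro rfl; exact hInt (lemA IHR)
      have hR : R ≠ [] := by rintro rfl; exact hInt (lemA' IHL)
      have hE := stopE hInt hL hR IHL IHR
      have hF := stopF hInt hL hR IHL IHR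
      have hlsle : lsS (SPG.node L R) ≤ LS (SPG.node L R) := by
        rw [elsS hInt, eLS hInt]
        obtain ⟨g, hg, hgd⟩ := List.mem_map.1 (WT.lmax_mem (l := L.map RS) (by simpa using hL))
        have h1 := (IHL g hg).rs_ge
        have h2 := WT.le_lmax (List.mem_map_of_mem (f := rsS) hg)
        omega
      have hlsge : LS (SPG.node L R) - 1 ≤ lsS (SPG.node L R) := by
        rw [elsS hInt, eLS hInt]
        obtain ⟨g, hg, hgd⟩ := List.mem_map.1 (WT.lmax_mem (l := L.map rsS) (by simpa using hL))
        have h1 := (IHL g hg).rs_le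
        have h2 := WT.le_lmax (List.mem_map_of_mem (f := RS) hg)
        omega
      have hrsge : RS (SPG.node L R) ≤ rsS (SPG.node L R) := by
        rw [eRS hInt, ersS hInt]
        obtain ⟨g, hg, hgd⟩ := List.mem_map.1 (WT.lmin_mem (l := R.map LS) (by simpa using hR))
        have h1 := (IHR g hg).ls_le
        have h2 := WT.lmin_le (List.mem_map_of_mem (f := lsS) hg)
        omega
      have hrsle : rsS (SPG.node L R) ≤ RS (SPG.node L R) + 1 := by
        rw [eRS hInt, ersS hInt]
        obtain ⟨g, hg, hgd⟩ := List.mem_map.1 (WT.lmin_mem (l := R.map lsS) (by simpa using hR))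
        have h1 := (IHR g hg).ls_ge
        have h2 := WT.lmin_le (List.mem_map_of_mem (f := LS) hg)
        omega
      have hwt : ∀ i, WT.IsWT (phi i (SPG.node L R)) i := by
        intro i
        rw [phi_neg hInt i]
        have h := WT.IsWT.node (p := !i)
          (L := L.attach.map fun g => phi (!i) g.1)
          (R := R.attach.map fun g => phi (!i) g.1)
          (hL := by simpa using hL) (hR := by simpa using hR)
          (hLp := fun g hg => by
            obtain ⟨⟨gl, hgl⟩, -, ha⟩ := List.mem_map.1 hg
            rw [← ha]; exact (IHL gl hgl).wt (!i))
          (hRp := fun g hg => by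
            obtain ⟨⟨gr, hgr⟩, -, ha⟩ := List.mem_map.1 hg
            rw [← ha]; exact (IHR gr hgr).wt (!i))
        simpa using h
      have hsW : (SPG.node L R).toPGame ≤ cI (LS (SPG.node L R)) := by
        rw [toPGame_node, eLS hInt]
        refine le_cI (fun i => ?_) (fun hneg => ?_)
        · refine PGame.not_le.1 (fun hle => (IHL i.1 i.2).sU ?_)
          exact (cI_mono (WT.le_lmax (List.mem_map_of_mem (f := rsS) i.2))).trans hle
        · have hE' := hE
          rw [eRS hInt, eLS hInt] at hE'
          obtain ⟨g, hg, hgd⟩ := List.mem_map.1 (WT.lmin_mem (l := R.map lsS) (by simpa using hR))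
          have h1 := (IHR g hg).ls_ge
          refine lf_iff_exists_le.2 (Or.inr ⟨⟨g, hg⟩, (IHR g hg).sW.trans (cI_mono (by omega))⟩)
      have hsX : cI (RS (SPG.node L R)) ≤ (SPG.node L R).toPGame := by
        rw [toPGame_node, eRS hInt]
        refine cI_le (fun j => ?_) (fun hpos => ?_)
        · refine PGame.not_le.1 (fun hle => (IHR j.1 j.2).sV ?_)
          exact hle.trans (cI_mono (WT.lmin_le (List.mem_map_of_mem (f := lsS) j.2)))
        · have hE' := hE
          rw [eRS hInt, eLS hInt] at hE'
          obtain ⟨g, hg, hgd⟩ := List.mem_map.1 (WT.lmax_mem (l := L.map rsS) (by simpa using hL))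
          have h1 := (IHL g hg).rs_le
          refine lf_iff_exists_le.2 (Or.inl ⟨⟨g, hg⟩, (cI_mono (by omega)).trans (IHL g hg).sX⟩)
      have hsU : ¬ cI (rsS (SPG.node L R)) ≤ (SPG.node L R).toPGame := by
        intro h
        rw [ersS hInt, toPGame_node] at h
        obtain ⟨g, hg, hgd⟩ := List.mem_map.1 (WT.lmin_mem (l := R.map LS) (by simpa using hR))
        have hmr : (PGame.mk {g // g ∈ L} {g // g ∈ R}
            (fun g => SPG.toPGame g.1) (fun g => SPG.toPGame g.1)) ⧏ g.toPGame :=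
          lf_moveRight (x := PGame.mk {g // g ∈ L} {g // g ∈ R} (fun g => SPG.toPGame g.1) (fun g => SPG.toPGame g.1)) ⟨g, hg⟩
        have h2 := lf_of_le_of_lf h hmr
        have hw := (IHR g hg).sW
        rw [hgd] at hw
        exact PGame.not_le.2 h2 hw
      have hsV : ¬ (SPG.node L R).toPGame ≤ cI (lsS (SPG.node L R)) := by
        intro h
        rw [elsS hInt, toPGame_node] at h
        obtain ⟨g, hg, hgd⟩ := List.mem_map.1 (WT.lmax_mem (l := L.map RS) (by simpa using hL))
        have hml : g.toPGame ⧏ (PGame.mk {g // g ∈ L} {g // g ∈ R}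
            (fun g => SPG.toPGame g.1) (fun g => SPG.toPGame g.1)) :=
          moveLeft_lf (x := PGame.mk {g // g ∈ L} {g // g ∈ R} (fun g => SPG.toPGame g.1) (fun g => SPG.toPGame g.1)) ⟨g, hg⟩
        have h2 := lf_of_le_of_lf (IHL g hg).sX hml
        have h3 := lf_of_lf_of_le h2 h
        rw [hgd] at h3
        exact lf_irrefl _ h3
      refine ⟨hwt, ?_, ?_, hlsle, hlsge, hrsge, hrsle, hsW, hsX, hsU, hsV, ?_⟩
      · -- sub
        intro i H p hsub hwtp
        rw [phi_neg hInt i] at hsub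
        cases hsub with
        | refl =>
          have hp : p = i := WT.isWT_unique hwtp (by rw [← phi_neg hInt i]; exact hwt i)
          subst hp
          rw [← phi_neg hInt p]
          cases p with
          | false => simpa [RS, LS] using hE
          | true => simpa [rsS, lsS] using hF
        | left hmem hsub' =>
          obtain ⟨⟨gl, hgl⟩, -, ha⟩ := List.mem_map.1 hmem
          rw [← ha] at hsub'
          exact (IHL gl hgl).sub (!i) H p hsub' hwtp
        | right hmem hsub' =>
          obtain ⟨⟨gr, hgr⟩, -, ha⟩ := List.mem_map.1 hmem
          rw [← ha] at hsub'
          exact (IHR gr hgr).sub (!i) H p hsub' hwtp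
      · -- att
        intro i
        obtain ⟨g, hg⟩ := List.exists_mem_of_ne_nil L hL
        obtain ⟨H, h1, h2, h3⟩ := (IHL g hg).att (!i)
        refine ⟨H, ?_, h2, h3⟩
        rw [phi_neg hInt i]
        exact WT.Subgame.left (List.mem_map.2 ⟨⟨g, hg⟩, List.mem_attach _ _, rfl⟩) h1
      · -- psiE
        intro i
        rw [phi_neg hInt i, psi_node, toPGame_node]
        constructor
        · refine le_iff_forall_lf.2 ⟨fun a => ?_, fun j => ?_⟩
          · obtain ⟨⟨gl, hgl⟩, -, ha⟩ := List.mem_map.1 a.2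
            show psi a.1 ⧏ _
            rw [← ha]
            refine (lf_congr_left (PGame.Equiv.symm ((IHL gl hgl).psiE (!i)))).1 ?_
            exact moveLeft_lf (x := PGame.mk {g // g ∈ L} {g // g ∈ R} (fun g => SPG.toPGame g.1) (fun g => SPG.toPGame g.1)) ⟨gl, hgl⟩
          · refine lf_iff_exists_le.2 (Or.inr ⟨⟨phi (!i) j.1,
              List.mem_map.2 ⟨⟨j.1, j.2⟩, List.mem_attach _ _, rfl⟩⟩, ?_⟩)
            show psi (phi (!i) j.1) ≤ j.1.toPGame
            exact PGame.Equiv.le ((IHR j.1 j.2).psiE (!i))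
        · refine le_iff_forall_lf.2 ⟨fun a => ?_, fun j => ?_⟩
          · refine lf_iff_exists_le.2 (Or.inl ⟨⟨phi (!i) a.1,
              List.mem_map.2 ⟨⟨a.1, a.2⟩, List.mem_attach _ _, rfl⟩⟩, ?_⟩)
            show a.1.toPGame ≤ psi (phi (!i) a.1)
            exact PGame.Equiv.ge ((IHL a.1 a.2).psiE (!i))
          · obtain ⟨⟨gr, hgr⟩, -, ha⟩ := List.mem_map.1 j.2
            show _ ⧏ psi j.1
            rw [← ha]
            refine (lf_congr_right (PGame.Equiv.symm ((IHR gr hgr).psiE (!i)))).1 ?_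
            exact lf_moveRight (x := PGame.mk {g // g ∈ L} {g // g ∈ R} (fun g => SPG.toPGame g.1) (fun g => SPG.toPGame g.1)) ⟨gr, hgr⟩
termination_by G => sizeOf G
decreasing_by all_goals exact hlt

-- SPLICE_AUX

/-- for any (short) partizan game G and i ∈ {0,1}, φᵢ(G) is a well-tempered
scoring game of parity i, lies in J (gap₀ = 0 and gap₁ ≤ 2), and ψ(φᵢ(G)) = G as partizan
game values. -/
theorem phi_properties (G : SPG) (i : Bool) :
    WT.IsWT (phi i G) i ∧
    (phi i G).gap false = ((0 : ℤ) : WithBot ℤ) ∧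
    (phi i G).gap true ≤ ((2 : ℤ) : WithBot ℤ) ∧
    PGame.Equiv (psi (phi i G)) G.toPGame := by
  have hG := good_all G
  refine ⟨hG.wt i, ?_, ?_, hG.psiE i⟩
  · -- gap at parity false is exactly 0
    rw [WT.gap]
    obtain ⟨H0, h01, h02, h03⟩ := hG.att i
    apply le_antisymm
    · refine csSup_le ⟨_, H0, h01, h02, rfl⟩ ?_
      rintro x ⟨H, h1, h2, rfl⟩
      have hb := hG.sub i H false h1 h2
      rw [if_neg (by simp)] at hb
      exact_mod_cast (by omega : H.Rout - H.Lout ≤ (0:ℤ))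
    · refine le_csSup ⟨((0:ℤ) : WithBot ℤ), ?_⟩ ?_
      · rintro x ⟨H, h1, h2, rfl⟩
        have hb := hG.sub i H false h1 h2
        rw [if_neg (by simp)] at hb
        exact_mod_cast (by omega : H.Rout - H.Lout ≤ (0:ℤ))
      · exact ⟨H0, h01, h02, by rw [h03]; simp⟩
  · -- gap at parity true is at most 2
    rw [WT.gap]
    rcases Set.eq_empty_or_nonempty {x : WithBot ℤ | ∃ H : WT, WT.Subgame H (phi i G) ∧
        WT.IsWT H true ∧ x = ((H.Rout - H.Lout : ℤ) : WithBot ℤ)} with he | hne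
    · rw [he, WithBot.sSup_empty]
      exact bot_le
    · refine csSup_le hne ?_
      rintro x ⟨H, h1, h2, rfl⟩
      have hb := hG.sub i H true h1 h2
      rw [if_pos rfl] at hb
      exact_mod_cast (by omega : H.Rout - H.Lout ≤ (2:ℤ))
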